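/- Let Ψ : ℝ² → ℝ be C³ in variables (y,z) with Ψ_{yz} = Ψ, and let W : ℝ → ℝ be differentiable. Define q := Ψ_y + Ψ and s := W(e^{y+z}(Ψ_y + Ψ_z − 2Ψ)). Then q satisfies the Klein–Gordon equation q_{yz} = q, and s satisfies K¹ s_y = K² s_z on ℝ², where K¹ := q_{zz} − 2q_z + q and K² := q_y + q_z − 2q. -/

import Mathlib

/- STATEMENT 7: given a solution Ψ of the Klein–Gordon equation Ψ_{yz} = Ψ
and a differentiable W, the pair q := Ψ_y + Ψ, s := W(e^{y+z}(Ψ_y + Ψ_z − 2Ψ))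
solves the system (K): q_{yz} = q and K¹ s_y = K² s_z. -/

noncomputable section

/-- Partial derivative with respect to the first variable (y). -/
def py (f : ℝ × ℝ → ℝ) (p : ℝ × ℝ) : ℝ := fderiv ℝ f p (1, 0)

/-- Partial derivative with respect to the second variable (z). -/
def pz (f : ℝ × ℝ → ℝ) (p : ℝ × ℝ) : ℝ := fderiv ℝ f p (0, 1)


section helpers
variable {f g : ℝ × ℝ → ℝ} {p w : ℝ × ℝ}

lemma pd_add (hf : DifferentiableAt ℝ f p) (hg : DifferentiableAt ℝ g p) :
    fderiv ℝ (fun x => f x + g x) p w = fderiv ℝ f p w + fderiv ℝ g p w := by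
  rw [fderiv_fun_add hf hg]; rfl

lemma pd_sub (hf : DifferentiableAt ℝ f p) (hg : DifferentiableAt ℝ g p) :
    fderiv ℝ (fun x => f x - g x) p w = fderiv ℝ f p w - fderiv ℝ g p w := by
  rw [fderiv_fun_sub hf hg]; rfl

lemma pd_const_mul (c : ℝ) (hf : DifferentiableAt ℝ f p) :
    fderiv ℝ (fun x => c * f x) p w = c * fderiv ℝ f p w := by
  rw [fderiv_const_mul hf]; rfl

lemma pd_mul (hf : DifferentiableAt ℝ f p) (hg : DifferentiableAt ℝ g p) :
    fderiv ℝ (fun x => f x * g x) p w = fderiv ℝ f p w * g p + f p * fderiv ℝ g p w := by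
  rw [fderiv_fun_mul hf hg]
  simp [smul_eq_mul]
  ring

lemma pd_comp (W : ℝ → ℝ) (hW : DifferentiableAt ℝ W (g p)) (hg : DifferentiableAt ℝ g p) :
    fderiv ℝ (fun x => W (g x)) p w = deriv W (g p) * fderiv ℝ g p w := by
  have : fderiv ℝ (W ∘ g) p = (fderiv ℝ W (g p)).comp (fderiv ℝ g p) := fderiv_comp p hW hg
  show fderiv ℝ (W ∘ g) p w = _
  rw [this]
  simp [fderiv_eq_smul_deriv, mul_comm]

lemma contDiff_pd (w : ℝ × ℝ) {n : WithTop ℕ∞} (hf : ContDiff ℝ (n+1) f) :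
    ContDiff ℝ n (fun p => fderiv ℝ f p w) :=
  (hf.fderiv_right le_rfl).clm_apply contDiff_const

lemma pd_comm (hf : ContDiff ℝ 2 f) (p : ℝ × ℝ) : py (pz f) p = pz (py f) p := by
  have hsym := (hf.contDiffAt (x := p)).isSymmSndFDerivAt (n := 2) (by simp) ((0,1) : ℝ × ℝ) ((1,0) : ℝ × ℝ)
  have hd : DifferentiableAt ℝ (fderiv ℝ f) p :=
    ((hf.fderiv_right (m := 1) (by norm_num)).differentiable (by norm_num)).differentiableAt
  have h1 : fderiv ℝ (fun x => fderiv ℝ f x (0,1)) p (1,0)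
      = fderiv ℝ (fderiv ℝ f) p (1,0) (0,1) := by
    rw [fderiv_clm_apply hd (differentiableAt_const _)]
    simp
  have h2 : fderiv ℝ (fun x => fderiv ℝ f x (1,0)) p (0,1)
      = fderiv ℝ (fderiv ℝ f) p (0,1) (1,0) := by
    rw [fderiv_clm_apply hd (differentiableAt_const _)]
    simp
  show fderiv ℝ (fun x => fderiv ℝ f x (0,1)) p (1,0) = fderiv ℝ (fun x => fderiv ℝ f x (1,0)) p (0,1)
  rw [h1, h2, hsym]

lemma pd_exp_mul (h : ℝ × ℝ → ℝ) (hh : DifferentiableAt ℝ h p) :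
    (fderiv ℝ (fun x : ℝ × ℝ => Real.exp (x.1 + x.2) * h x) p w)
      = Real.exp (p.1 + p.2) * ((w.1 + w.2) * h p + fderiv ℝ h p w) := by
  have hE : HasFDerivAt (fun x : ℝ × ℝ => Real.exp (x.1 + x.2))
      (Real.exp (p.1 + p.2) • ((ContinuousLinearMap.fst ℝ ℝ ℝ) + (ContinuousLinearMap.snd ℝ ℝ ℝ))) p :=
    (hasFDerivAt_fst.add hasFDerivAt_snd).exp
  rw [pd_mul hE.differentiableAt hh, hE.fderiv]
  simp [smul_eq_mul]
  ring
end helpers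

theorem pseudopotential_solution_of_K
    (Ψ : ℝ × ℝ → ℝ) (hΨ : ContDiff ℝ 3 Ψ)
    (hKG : ∀ p : ℝ × ℝ, pz (py Ψ) p = Ψ p)
    (W : ℝ → ℝ) (hW : Differentiable ℝ W) :
    let q : ℝ × ℝ → ℝ := fun p => py Ψ p + Ψ p
    let s : ℝ × ℝ → ℝ := fun p =>
      W (Real.exp (p.1 + p.2) * (py Ψ p + pz Ψ p - 2 * Ψ p))
    ∀ p : ℝ × ℝ,
      pz (py q) p = q p ∧
      (pz (pz q) p - 2 * pz q p + q p) * py s p =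
        (py q p + pz q p - 2 * q p) * pz s p := by
  intro q s p
  have hΨ2 : ContDiff ℝ 2 Ψ := hΨ.of_le (by norm_num)
  have hΨd : ∀ x, DifferentiableAt ℝ Ψ x :=
    fun x => (hΨ2.differentiable (by norm_num)).differentiableAt
  have hu2 : ContDiff ℝ 2 (py Ψ) := contDiff_pd (1,0) (hΨ.of_le (by norm_num))
  have hv2 : ContDiff ℝ 2 (pz Ψ) := contDiff_pd (0,1) (hΨ.of_le (by norm_num))
  have hud : ∀ x, DifferentiableAt ℝ (py Ψ) x :=
    fun x => (hu2.differentiable (by norm_num)).differentiableAt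
  have hvd : ∀ x, DifferentiableAt ℝ (pz Ψ) x :=
    fun x => (hv2.differentiable (by norm_num)).differentiableAt
  have huyd : ∀ x, DifferentiableAt ℝ (py (py Ψ)) x := fun x =>
    ((contDiff_pd (n := 1) (1,0) (hu2.of_le (by norm_num))).differentiable (by norm_num)).differentiableAt
  have hvzd : ∀ x, DifferentiableAt ℝ (pz (pz Ψ)) x := fun x =>
    ((contDiff_pd (n := 1) (0,1) (hv2.of_le (by norm_num))).differentiable (by norm_num)).differentiableAt
  have e1 : pz (py Ψ) = Ψ := funext hKG
  have e2 : ∀ x, py (pz Ψ) x = Ψ x := fun x => (pd_comm hΨ2 x).trans (hKG x)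
  -- derivatives of q
  have hq_py : py (fun x => py Ψ x + Ψ x) = fun x => py (py Ψ) x + py Ψ x :=
    funext fun x => pd_add (f := py Ψ) (g := Ψ) (hud x) (hΨd x)
  have hq_pz : pz (fun x => py Ψ x + Ψ x) = fun x => Ψ x + pz Ψ x := by
    funext x
    have h := pd_add (f := py Ψ) (g := Ψ) (w := (0,1)) (hud x) (hΨd x)
    show fderiv ℝ _ x (0,1) = _
    rw [h]
    show pz (py Ψ) x + pz Ψ x = _
    rw [hKG x]
  constructor
  · show pz (py (fun x => py Ψ x + Ψ x)) p = py Ψ p + Ψ p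
    rw [hq_py]
    have h := pd_add (f := py (py Ψ)) (g := py Ψ) (w := (0,1)) (huyd p) (hud p)
    show fderiv ℝ _ p (0,1) = _
    rw [h]
    have h4 : pz (py (py Ψ)) p = py (pz (py Ψ)) p := (pd_comm hu2 p).symm
    show pz (py (py Ψ)) p + pz (py Ψ) p = _
    rw [h4, e1]
  · -- second equation
    have hhd : ∀ x, DifferentiableAt ℝ (fun y => py Ψ y + pz Ψ y - 2 * Ψ y) x :=
      fun x => ((hud x).add (hvd x)).sub ((hΨd x).const_mul 2)
    have hgd : ∀ x, DifferentiableAt ℝ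
        (fun y : ℝ × ℝ => Real.exp (y.1 + y.2) * (py Ψ y + pz Ψ y - 2 * Ψ y)) x :=
      fun x => ((differentiableAt_fst.add differentiableAt_snd).exp).mul (hhd x)
    -- derivatives of the inner function h
    have hhy : fderiv ℝ (fun y => py Ψ y + pz Ψ y - 2 * Ψ y) p ((1,0) : ℝ × ℝ)
        = py (py Ψ) p + Ψ p - 2 * py Ψ p := by
      rw [pd_sub (f := fun y => py Ψ y + pz Ψ y) (g := fun y => 2 * Ψ y)
          ((hud p).add (hvd p)) ((hΨd p).const_mul 2),
        pd_add (f := py Ψ) (g := pz Ψ) (hud p) (hvd p),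
        pd_const_mul 2 (hΨd p)]
      show py (py Ψ) p + py (pz Ψ) p - 2 * py Ψ p = _
      rw [e2 p]
    have hhz : fderiv ℝ (fun y => py Ψ y + pz Ψ y - 2 * Ψ y) p ((0,1) : ℝ × ℝ)
        = Ψ p + pz (pz Ψ) p - 2 * pz Ψ p := by
      rw [pd_sub (f := fun y => py Ψ y + pz Ψ y) (g := fun y => 2 * Ψ y)
          ((hud p).add (hvd p)) ((hΨd p).const_mul 2),
        pd_add (f := py Ψ) (g := pz Ψ) (hud p) (hvd p),
        pd_const_mul 2 (hΨd p)]
      show pz (py Ψ) p + pz (pz Ψ) p - 2 * pz Ψ p = _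
      rw [hKG p]
    -- derivatives of s
    have hsy : py s p = deriv W (Real.exp (p.1 + p.2) * (py Ψ p + pz Ψ p - 2 * Ψ p)) *
        (Real.exp (p.1 + p.2) * ((1 + 0) * (py Ψ p + pz Ψ p - 2 * Ψ p)
          + (py (py Ψ) p + Ψ p - 2 * py Ψ p))) := by
      show fderiv ℝ (fun x => W (Real.exp (x.1 + x.2) * (py Ψ x + pz Ψ x - 2 * Ψ x))) p (1,0) = _
      rw [pd_comp (g := fun y : ℝ × ℝ => Real.exp (y.1 + y.2) * (py Ψ y + pz Ψ y - 2 * Ψ y))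
          W (hW _) (hgd p),
        pd_exp_mul (fun y => py Ψ y + pz Ψ y - 2 * Ψ y) (hhd p), hhy]
    have hsz : pz s p = deriv W (Real.exp (p.1 + p.2) * (py Ψ p + pz Ψ p - 2 * Ψ p)) *
        (Real.exp (p.1 + p.2) * ((0 + 1) * (py Ψ p + pz Ψ p - 2 * Ψ p)
          + (Ψ p + pz (pz Ψ) p - 2 * pz Ψ p))) := by
      show fderiv ℝ (fun x => W (Real.exp (x.1 + x.2) * (py Ψ x + pz Ψ x - 2 * Ψ x))) p (0,1) = _
      rw [pd_comp (g := fun y : ℝ × ℝ => Real.exp (y.1 + y.2) * (py Ψ y + pz Ψ y - 2 * Ψ y))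
          W (hW _) (hgd p),
        pd_exp_mul (fun y => py Ψ y + pz Ψ y - 2 * Ψ y) (hhd p), hhz]
    -- remaining pieces of K¹, K²
    have hqz : pz q p = Ψ p + pz Ψ p := congrFun hq_pz p
    have hqy : py q p = py (py Ψ) p + py Ψ p := congrFun hq_py p
    have hqzz : pz (pz q) p = pz Ψ p + pz (pz Ψ) p := by
      show pz (pz (fun x => py Ψ x + Ψ x)) p = _
      rw [hq_pz]
      exact pd_add (f := Ψ) (g := pz Ψ) (w := (0,1)) (hΨd p) (hvd p)
    rw [hsy, hsz, hqz, hqy, hqzz]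
    show (pz Ψ p + pz (pz Ψ) p - 2 * (Ψ p + pz Ψ p) + (py Ψ p + Ψ p)) * _ = _
    ring
end
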